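/- Let p be a prime and α ∈ ℚ_p be algebraic over ℚ of degree n ≥ 2. Then there exists a constant c > 0 (depending only on α) such that for all integers a, b with b ≠ 0, |α − a/b|_p ≥ c / max(|a|, |b|)^n, where |·| is the usual absolute value on ℤ. -/

import Mathlib

open Polynomial Finset

lemma aux_one_le (p : ℕ) [Fact p.Prime] (m : ℤ) (hm : m ≠ 0) :
    (1:ℝ) ≤ ‖(m : ℚ_[p])‖ * |(m:ℝ)| := by
  have hp : (1:ℝ) < p := by exact_mod_cast (Fact.out : p.Prime).one_lt
  have h0 : (0:ℝ) < p := lt_trans one_pos hp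
  have hq : ((m:ℚ)) ≠ 0 := by exact_mod_cast hm
  have hnorm : ‖(m : ℚ_[p])‖ = (p:ℝ) ^ (-(padicValInt p m : ℤ)) := by
    rw [show ((m:ℤ) : ℚ_[p]) = ((m:ℚ) : ℚ_[p]) by push_cast; ring,
      Padic.eq_padicNorm, padicNorm.eq_zpow_of_nonzero hq]
    push_cast
    rw [padicValRat.of_int]
  have hdvd : (p:ℤ) ^ padicValInt p m ∣ m := padicValInt_dvd m
  have hle : (p:ℤ) ^ padicValInt p m ≤ |m| :=
    Int.le_of_dvd (abs_pos.mpr hm) (hdvd.trans (self_dvd_abs m))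
  have hle' : (p:ℝ) ^ (padicValInt p m : ℤ) ≤ |(m:ℝ)| := by
    rw [← Int.cast_abs]
    exact_mod_cast hle
  rw [hnorm]
  calc (1:ℝ) = (p:ℝ) ^ (-(padicValInt p m : ℤ)) * (p:ℝ) ^ (padicValInt p m : ℤ) := by
        rw [← zpow_add₀ (ne_of_gt h0)]; simp
    _ ≤ _ := by
        apply mul_le_mul_of_nonneg_left hle'
        positivity

lemma aux_cast (K : Type*) [Field K] [CharZero K] (f : Polynomial ℤ) (n : ℕ)
    (hdeg : f.natDegree = n) (a b : ℤ) (hb : (b:K) ≠ 0) :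
    ((∑ k ∈ Finset.range (n+1), f.coeff k * a^k * b^(n-k) : ℤ) : K)
      = (b:K)^n * (f.map (Int.castRingHom K)).eval ((a:K)/(b:K)) := by
  rw [Polynomial.eval_map, Polynomial.eval₂_eq_sum_range, hdeg, Finset.mul_sum]
  push_cast
  refine Finset.sum_congr rfl ?_
  intro k hk
  simp only [eq_intCast]
  have hkn : k ≤ n := Nat.lt_succ_iff.mp (Finset.mem_range.mp hk)
  have hbn : (b:K)^n = (b:K)^(n-k) * (b:K)^k := by
    rw [← pow_add]; congr 1; omega
  rw [div_pow, hbn]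
  field_simp

lemma aux_no_root (f : Polynomial ℤ) (n : ℕ) (hn : 2 ≤ n) (hf_irr : Irreducible f)
    (hf_deg : f.natDegree = n) (q : ℚ) :
    (f.map (Int.castRingHom ℚ)).eval q ≠ 0 := by
  have hprim : f.IsPrimitive := by
    intro r hr
    obtain ⟨g, hg⟩ := hr
    rcases hf_irr.isUnit_or_isUnit hg with h | h
    · exact Polynomial.isUnit_C.mp h
    · exfalso
      have h0 : g.natDegree = 0 := Polynomial.natDegree_eq_zero_of_isUnit h
      have := Polynomial.natDegree_mul_le (p := Polynomial.C r) (q := g)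
      rw [← hg] at this
      simp [h0, hf_deg] at this
      omega
  have hirrQ : Irreducible (f.map (Int.castRingHom ℚ)) := by
    have := (Polynomial.IsPrimitive.Int.irreducible_iff_irreducible_map_cast hprim).mp hf_irr
    convert this using 2
  set F := f.map (Int.castRingHom ℚ) with hF
  have hFdeg : F.natDegree = n := by
    rw [hF, Polynomial.natDegree_map_eq_of_injective (fun x y h => by simpa using h), hf_deg]
  intro hroot
  have hdvd : X - C q ∣ F := Polynomial.dvd_iff_isRoot.mpr hroot
  obtain ⟨g, hg⟩ := hdvd
  rcases hirrQ.isUnit_or_isUnit hg with h | h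
  · exact (Polynomial.not_isUnit_X_sub_C q) h
  · have h0 : g.natDegree = 0 := Polynomial.natDegree_eq_zero_of_isUnit h
    have hgne : g ≠ 0 := fun h' => by simp [h'] at h
    have : F.natDegree = 1 := by
      rw [hg, Polynomial.natDegree_mul (Polynomial.X_sub_C_ne_zero q) hgne,
        Polynomial.natDegree_X_sub_C, h0]
    omega

lemma aux_eval_bound (p : ℕ) [Fact p.Prime] (G : Polynomial ℚ_[p]) (t : ℚ_[p]) (ht : ‖t‖ ≤ 1) :
    ‖G.eval t‖ ≤ (∑ k ∈ Finset.range (G.natDegree+1), ‖G.coeff k‖) + 1 := by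
  rw [Polynomial.eval_eq_sum_range]
  refine le_trans (norm_sum_le _ _) ?_
  have h : ∀ k ∈ Finset.range (G.natDegree+1), ‖G.coeff k * t^k‖ ≤ ‖G.coeff k‖ := by
    intro k _
    rw [norm_mul, norm_pow]
    calc ‖G.coeff k‖ * ‖t‖^k ≤ ‖G.coeff k‖ * 1 :=
          mul_le_mul_of_nonneg_left (pow_le_one₀ (norm_nonneg t) ht) (norm_nonneg _)
      _ = ‖G.coeff k‖ := mul_one _
  linarith [Finset.sum_le_sum h]

lemma aux_int_bound (f : Polynomial ℤ) (n : ℕ) (a b : ℤ) :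
    |∑ k ∈ Finset.range (n+1), f.coeff k * a^k * b^(n-k)|
      ≤ (∑ k ∈ Finset.range (n+1), |f.coeff k|) * (max |a| |b|)^n := by
  refine le_trans (Finset.abs_sum_le_sum_abs _ _) ?_
  rw [Finset.sum_mul]
  refine Finset.sum_le_sum ?_
  intro k hk
  have hkn : k ≤ n := Nat.lt_succ_iff.mp (Finset.mem_range.mp hk)
  rw [abs_mul, abs_mul, abs_pow, abs_pow]
  have hM : (0:ℤ) ≤ max |a| |b| := le_trans (abs_nonneg a) (le_max_left _ _)
  have h1 : |a|^k * |b|^(n-k) ≤ (max |a| |b|)^n := by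
    calc |a|^k * |b|^(n-k) ≤ (max |a| |b|)^k * (max |a| |b|)^(n-k) := by
          apply mul_le_mul (pow_le_pow_left₀ (abs_nonneg a) (le_max_left _ _) k)
            (pow_le_pow_left₀ (abs_nonneg b) (le_max_right _ _) _)
            (by positivity) (by positivity)
      _ = (max |a| |b|)^n := by rw [← pow_add]; congr 1; omega
  calc |f.coeff k| * |a|^k * |b|^(n-k) = |f.coeff k| * (|a|^k * |b|^(n-k)) := by ring
    _ ≤ |f.coeff k| * (max |a| |b|)^n := mul_le_mul_of_nonneg_left h1 (abs_nonneg _)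

/-- p-adic Liouville inequality: if α ∈ ℚ_p is algebraic of degree
n ≥ 2 over ℚ, then there is c > 0 with |α − a/b|_p ≥ c / max(|a|,|b|)^n for all
integers a, b with b ≠ 0. -/
theorem stmt_6 (p : ℕ) [Fact p.Prime] (α : ℚ_[p]) (n : ℕ) (hn : 2 ≤ n)
    (f : Polynomial ℤ) (hf_irr : Irreducible f) (hf_deg : f.natDegree = n)
    (hf_root : Polynomial.aeval α f = 0) :
    ∃ c : ℝ, 0 < c ∧ ∀ a b : ℤ, b ≠ 0 →
      c / ((max |a| |b| : ℤ) : ℝ) ^ n ≤ ‖α - (a : ℚ_[p]) / (b : ℚ_[p])‖ := by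
  set F : Polynomial ℚ_[p] := f.map (Int.castRingHom ℚ_[p]) with hFdef
  have hFroot : F.eval α = 0 := by
    rw [hFdef, Polynomial.eval_map, ← algebraMap_int_eq, ← Polynomial.aeval_def]
    exact hf_root
  set G : Polynomial ℚ_[p] := (Polynomial.taylor α F).divX with hGdef
  set C₂ : ℝ := (∑ k ∈ Finset.range (G.natDegree+1), ‖G.coeff k‖) + 1 with hC₂def
  have hC₂pos : 0 < C₂ := by
    have : 0 ≤ ∑ k ∈ Finset.range (G.natDegree+1), ‖G.coeff k‖ :=
      Finset.sum_nonneg (fun k _ => norm_nonneg _)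
    linarith
  set C₁ : ℝ := ((∑ k ∈ Finset.range (n+1), |f.coeff k| : ℤ) : ℝ) + 1 with hC₁def
  have hC₁pos : 0 < C₁ := by
    have : (0:ℤ) ≤ ∑ k ∈ Finset.range (n+1), |f.coeff k| :=
      Finset.sum_nonneg (fun k _ => abs_nonneg _)
    have : (0:ℝ) ≤ ((∑ k ∈ Finset.range (n+1), |f.coeff k| : ℤ) : ℝ) := by exact_mod_cast this
    linarith
  refine ⟨min 1 (1/(C₁*C₂)), lt_min one_pos (by positivity), ?_⟩
  intro a b hb
  set c : ℝ := min 1 (1/(C₁*C₂)) with hcdef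
  have hcpos : 0 < c := lt_min one_pos (by positivity)
  set M : ℝ := ((max |a| |b| : ℤ) : ℝ) with hMdef
  have hM1 : (1:ℝ) ≤ M := by
    have h : (1:ℤ) ≤ max |a| |b| := le_trans (Int.one_le_abs hb) (le_max_right _ _)
    rw [hMdef]; exact_mod_cast h
  have hMn : (1:ℝ) ≤ M^n := one_le_pow₀ hM1
  have hMnpos : (0:ℝ) < M^n := lt_of_lt_of_le one_pos hMn
  have hbp : ((b:ℤ) : ℚ_[p]) ≠ 0 := Int.cast_ne_zero.mpr hb
  set t : ℚ_[p] := (a : ℚ_[p]) / (b : ℚ_[p]) - α with htdef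
  have hrev : ‖α - (a : ℚ_[p]) / (b : ℚ_[p])‖ = ‖t‖ := by rw [htdef, norm_sub_rev]
  rw [hrev]
  by_cases ht1 : 1 < ‖t‖
  · calc c / M^n ≤ c := div_le_self hcpos.le hMn
      _ ≤ 1 := min_le_left _ _
      _ ≤ ‖t‖ := ht1.le
  push_neg at ht1
  -- main case
  set N : ℤ := ∑ k ∈ Finset.range (n+1), f.coeff k * a^k * b^(n-k) with hNdef
  have hNp : ((N:ℤ) : ℚ_[p]) = (b:ℚ_[p])^n * F.eval ((a:ℚ_[p])/(b:ℚ_[p])) :=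
    aux_cast ℚ_[p] f n hf_deg a b hbp
  have hNne : N ≠ 0 := by
    intro h0
    have hbQ : ((b:ℤ) : ℚ) ≠ 0 := Int.cast_ne_zero.mpr hb
    have hNQ := aux_cast ℚ f n hf_deg a b hbQ
    rw [← hNdef, h0] at hNQ
    have := aux_no_root f n hn hf_irr hf_deg ((a:ℚ)/(b:ℚ))
    have hbn : ((b:ℚ))^n ≠ 0 := pow_ne_zero _ hbQ
    simp only [Int.cast_zero] at hNQ
    exact (mul_ne_zero hbn this) hNQ.symm
  -- norm of F.eval at a/b in terms of t
  have htay : F.eval ((a:ℚ_[p])/(b:ℚ_[p])) = G.eval t * t := by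
    have h1 : (Polynomial.taylor α F).eval t = F.eval (t + α) := Polynomial.taylor_eval α F t
    have h2 : t + α = (a:ℚ_[p])/(b:ℚ_[p]) := by rw [htdef]; ring
    have h3 : Polynomial.taylor α F = G * Polynomial.X := by
      have := Polynomial.divX_mul_X_add (Polynomial.taylor α F)
      rw [Polynomial.taylor_coeff_zero, hFroot] at this
      simpa [hGdef] using this.symm
    rw [← h2, ← h1, h3]
    simp
  have hGb : ‖G.eval t‖ ≤ C₂ := aux_eval_bound p G t ht1
  have hNleF : ‖((N:ℤ) : ℚ_[p])‖ ≤ ‖F.eval ((a:ℚ_[p])/(b:ℚ_[p]))‖ := by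
    rw [hNp, norm_mul, norm_pow]
    have hb1 : ‖((b:ℤ):ℚ_[p])‖ ≤ 1 := Padic.norm_int_le_one b
    calc ‖((b:ℤ):ℚ_[p])‖^n * ‖F.eval ((a:ℚ_[p])/(b:ℚ_[p]))‖
        ≤ 1 * ‖F.eval ((a:ℚ_[p])/(b:ℚ_[p]))‖ := by
          apply mul_le_mul_of_nonneg_right _ (norm_nonneg _)
          exact pow_le_one₀ (norm_nonneg _) hb1
      _ = _ := one_mul _
  have hNnorm : ‖((N:ℤ) : ℚ_[p])‖ ≤ C₂ * ‖t‖ := by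
    refine hNleF.trans ?_
    rw [htay, norm_mul]
    exact mul_le_mul_of_nonneg_right hGb (norm_nonneg _)
  have hNabs : |(N:ℝ)| ≤ C₁ * M^n := by
    have h := aux_int_bound f n a b
    rw [← hNdef] at h
    have hcast : |(N:ℝ)| ≤ ((∑ k ∈ Finset.range (n+1), |f.coeff k| : ℤ) : ℝ) * M^n := by
      rw [← Int.cast_abs, hMdef]
      push_cast
      exact_mod_cast h
    refine hcast.trans ?_
    apply mul_le_mul_of_nonneg_right _ hMnpos.le
    rw [hC₁def]; linarith
  have hone : (1:ℝ) ≤ ‖((N:ℤ) : ℚ_[p])‖ * |(N:ℝ)| := aux_one_le p N hNne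
  have hkey : (1:ℝ) ≤ (C₂ * ‖t‖) * (C₁ * M^n) := by
    refine hone.trans ?_
    apply mul_le_mul hNnorm hNabs (abs_nonneg _)
    positivity
  have ht0 : 0 ≤ ‖t‖ := norm_nonneg t
  calc c / M^n ≤ (1/(C₁*C₂)) / M^n := by
        gcongr
        exact min_le_right _ _
      _ ≤ ‖t‖ := by
        rw [div_div, div_le_iff₀ (by positivity)]
        nlinarith
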